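/- Let (x_i, f_i) be a Schauder frame of a Banach space X. Then the following are equivalent: (a) every normalized block sequence of (x_i) is weakly null; (b) the frame is locally shrinking and pre-shrinking; (c) the frame is locally shrinking and X* equals the closed linear span of (f_i)_{i∈ℕ}. -/

import Mathlib

open Filter Topology

/-- `sup { |g z| : z ∈ span (x i : i ≥ n), ‖z‖ ≤ 1 }`. -/
noncomputable def tailSupX {X : Type*} [NormedAddCommGroup X] [NormedSpace ℝ X]
    (x : ℕ → X) (g : X →L[ℝ] ℝ) (n : ℕ) : ℝ :=
  sSup ((fun z : X => |g z|) ''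
    {z | z ∈ Submodule.span ℝ (x '' {i | n ≤ i}) ∧ ‖z‖ ≤ 1})

/-- `u` is a normalized block sequence of `(x i)`. -/
def IsNormalizedBlock {X : Type*} [NormedAddCommGroup X] [NormedSpace ℝ X]
    (x : ℕ → X) (u : ℕ → X) : Prop :=
  ∃ (m n : ℕ → ℕ) (a : ℕ → ℝ), (∀ k, m k ≤ n k) ∧ (∀ k, n k < m (k + 1)) ∧
    (∀ k, u k = ∑ i ∈ Finset.Icc (m k) (n k), a i • x i) ∧ ∀ k, ‖u k‖ = 1

/-- `u` is weakly null. -/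
def WeaklyNull {X : Type*} [NormedAddCommGroup X] [NormedSpace ℝ X] (u : ℕ → X) : Prop :=
  ∀ g : X →L[ℝ] ℝ, Tendsto (fun k => g (u k)) atTop (𝓝 0)

namespace SchauderFrameAux

variable {X : Type*} [NormedAddCommGroup X] [NormedSpace ℝ X]

lemma tailSet_bddAbove (x : ℕ → X) (g : X →L[ℝ] ℝ) (n : ℕ) :
    BddAbove ((fun z : X => |g z|) ''
      {z | z ∈ Submodule.span ℝ (x '' {i | n ≤ i}) ∧ ‖z‖ ≤ 1}) := by
  refine ⟨‖g‖, ?_⟩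
  rintro y ⟨z, ⟨-, hz⟩, rfl⟩
  calc |g z| = ‖g z‖ := rfl
    _ ≤ ‖g‖ * ‖z‖ := g.le_opNorm z
    _ ≤ ‖g‖ * 1 := mul_le_mul_of_nonneg_left hz (norm_nonneg _)
    _ = ‖g‖ := mul_one _

lemma tailSet_mem_zero (x : ℕ → X) (g : X →L[ℝ] ℝ) (n : ℕ) :
    |g (0 : X)| ∈ ((fun z : X => |g z|) ''
      {z | z ∈ Submodule.span ℝ (x '' {i | n ≤ i}) ∧ ‖z‖ ≤ 1}) :=
  ⟨0, ⟨Submodule.zero_mem _, by simp⟩, rfl⟩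

lemma tailSupX_nonneg (x : ℕ → X) (g : X →L[ℝ] ℝ) (n : ℕ) : 0 ≤ tailSupX x g n := by
  have h := le_csSup (tailSet_bddAbove x g n) (tailSet_mem_zero x g n)
  simpa [tailSupX] using h

lemma abs_le_tailSupX (x : ℕ → X) (g : X →L[ℝ] ℝ) (n : ℕ) {z : X}
    (hz : z ∈ Submodule.span ℝ (x '' {i | n ≤ i})) :
    |g z| ≤ tailSupX x g n * ‖z‖ := by
  rcases eq_or_ne z 0 with rfl | hz0
  · simp
  · have hn : 0 < ‖z‖ := norm_pos_iff.2 hz0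
    have hmem : |g (‖z‖⁻¹ • z)| ≤ tailSupX x g n := by
      refine le_csSup (tailSet_bddAbove x g n) ⟨_, ⟨Submodule.smul_mem _ _ hz, ?_⟩, rfl⟩
      rw [norm_smul, norm_inv, norm_norm, inv_mul_cancel₀ hn.ne']
    rw [map_smul, smul_eq_mul, abs_mul, abs_inv, abs_norm] at hmem
    rw [← div_le_iff₀ hn, div_eq_inv_mul]
    exact hmem

lemma abs_le_tailSupX_closure (x : ℕ → X) (g : X →L[ℝ] ℝ) (n : ℕ) {z : X}
    (hz : z ∈ closure ((Submodule.span ℝ (x '' {i | n ≤ i}) : Submodule ℝ X) : Set X)) :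
    |g z| ≤ tailSupX x g n * ‖z‖ := by
  have hcl : IsClosed {w : X | |g w| ≤ tailSupX x g n * ‖w‖} :=
    isClosed_le g.continuous.abs (continuous_const.mul continuous_norm)
  exact closure_minimal (fun w hw => abs_le_tailSupX x g n hw) hcl hz

lemma tailSupX_antitone (x : ℕ → X) (g : X →L[ℝ] ℝ) : Antitone (tailSupX x g) := by
  intro a b hab
  refine csSup_le_csSup (tailSet_bddAbove x g a) ⟨_, tailSet_mem_zero x g b⟩ ?_
  rintro y ⟨z, ⟨hz, hz1⟩, rfl⟩
  refine ⟨z, ⟨?_, hz1⟩, rfl⟩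
  exact Submodule.span_mono (Set.image_mono fun i hi => le_trans hab hi) hz

lemma exists_eps_of_not_tendsto {x : ℕ → X} {g : X →L[ℝ] ℝ}
    (h : ¬ Tendsto (tailSupX x g) atTop (𝓝 0)) :
    ∃ ε > 0, ∀ n, ε ≤ tailSupX x g n := by
  by_contra hc
  push_neg at hc
  apply h
  rw [Metric.tendsto_atTop]
  intro ε hε
  obtain ⟨n0, hn0⟩ := hc ε hε
  refine ⟨n0, fun n hn => ?_⟩
  rw [Real.dist_eq, sub_zero, abs_of_nonneg (tailSupX_nonneg x g n)]
  exact lt_of_le_of_lt (tailSupX_antitone x g hn) hn0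

lemma exists_repr {x : ℕ → X} {n : ℕ} {z : X}
    (hz : z ∈ Submodule.span ℝ (x '' {i | n ≤ i})) :
    ∃ N, n ≤ N ∧ ∃ a : ℕ → ℝ, z = ∑ i ∈ Finset.Icc n N, a i • x i := by
  classical
  have key : ∀ (N M : ℕ) (a : ℕ → ℝ), N ≤ M →
      ∑ i ∈ Finset.Icc n M, (if i ≤ N then a i else 0) • x i
        = ∑ i ∈ Finset.Icc n N, a i • x i := by
    intro N M a h
    rw [← Finset.sum_subset (Finset.Icc_subset_Icc_right h)]
    · exact Finset.sum_congr rfl fun i hi => by rw [if_pos (Finset.mem_Icc.1 hi).2]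
    · intro i hi hni
      have hiN : ¬ i ≤ N := fun hle => hni (Finset.mem_Icc.2 ⟨(Finset.mem_Icc.1 hi).1, hle⟩)
      simp [hiN]
  induction hz using Submodule.span_induction with
  | mem w hw =>
    obtain ⟨j, hj, rfl⟩ := hw
    refine ⟨j, hj, fun i => if i = j then 1 else 0, ?_⟩
    simp only [ite_smul, one_smul, zero_smul]
    rw [Finset.sum_ite_eq' (Finset.Icc n j) j x, if_pos (Finset.mem_Icc.2 ⟨hj, le_rfl⟩)]
  | zero => exact ⟨n, le_rfl, 0, by simp⟩
  | add w₁ w₂ h₁ h₂ ih₁ ih₂ =>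
    obtain ⟨N₁, hN₁, a₁, rfl⟩ := ih₁
    obtain ⟨N₂, hN₂, a₂, rfl⟩ := ih₂
    refine ⟨max N₁ N₂, le_trans hN₁ (le_max_left _ _),
      fun i => (if i ≤ N₁ then a₁ i else 0) + (if i ≤ N₂ then a₂ i else 0), ?_⟩
    rw [Finset.sum_congr rfl (fun i _ => add_smul _ _ (x i)), Finset.sum_add_distrib,
      key N₁ _ a₁ (le_max_left _ _), key N₂ _ a₂ (le_max_right _ _)]
  | smul c w hw ih =>
    obtain ⟨N, hN, a, rfl⟩ := ih
    refine ⟨N, hN, fun i => c * a i, ?_⟩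
    rw [Finset.smul_sum]
    exact Finset.sum_congr rfl fun i _ => by rw [smul_smul]

end SchauderFrameAux

open SchauderFrameAux

set_option maxHeartbeats 1000000 in
/-- Let `(x i, f i)` be a Schauder frame of a Banach space `X`. TFAE:
(a) every normalized block sequence of `(x i)` is weakly null;
(b) the frame is locally shrinking and pre-shrinking;
(c) the frame is locally shrinking and `X*` is the closed linear span of `(f i)`. -/
theorem schauderFrame_shrinking_tfae
    {X : Type*} [NormedAddCommGroup X] [NormedSpace ℝ X] [CompleteSpace X]
    (x : ℕ → X) (f : ℕ → X →L[ℝ] ℝ)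
    (hx : ∀ i, x i ≠ 0) (hf : ∀ i, f i ≠ 0)
    (hframe : ∀ v : X,
      Tendsto (fun n => ∑ i ∈ Finset.range n, f i v • x i) atTop (𝓝 v)) :
    List.TFAE
      [ (∀ u : ℕ → X, IsNormalizedBlock x u → WeaklyNull u),
        ((∀ m : ℕ, Tendsto (tailSupX x (f m)) atTop (𝓝 0)) ∧
          ∀ g : X →L[ℝ] ℝ,
            Tendsto (fun n => ∑ i ∈ Finset.range n, g (x i) • f i) atTop (𝓝 g)),
        ((∀ m : ℕ, Tendsto (tailSupX x (f m)) atTop (𝓝 0)) ∧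
          closure ((Submodule.span ℝ (Set.range f) : Submodule ℝ (X →L[ℝ] ℝ)) :
            Set (X →L[ℝ] ℝ)) = Set.univ) ] := by
  classical
  -- partial sum operators
  set P : ℕ → X →L[ℝ] X := fun n => ∑ i ∈ Finset.range n, (f i).smulRight (x i) with hPdef
  have hPapply : ∀ n v, P n v = ∑ i ∈ Finset.range n, f i v • x i := by
    intro n v
    simp [hPdef, ContinuousLinearMap.sum_apply]
  have hPtend : ∀ v, Tendsto (fun n => P n v) atTop (𝓝 v) := by
    intro v
    have := hframe v
    simpa [hPapply] using this
  -- uniform bound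
  obtain ⟨C0, hC0⟩ : ∃ C', ∀ n, ‖P n‖ ≤ C' := by
    apply banach_steinhaus
    intro v
    have hb : BddAbove (Set.range fun n => ‖P n v‖) := (hPtend v).norm.bddAbove_range
    obtain ⟨C, hC⟩ := hb
    exact ⟨C, fun n => hC (Set.mem_range_self n)⟩
  set C : ℝ := max C0 1 with hCdef
  have hC : ∀ n, ‖P n‖ ≤ C := fun n => le_trans (hC0 n) (le_max_left _ _)
  have hC1 : (1:ℝ) ≤ C := le_max_right _ _
  -- identity for the adjoint partial sums
  have hSg : ∀ (g : X →L[ℝ] ℝ) (n : ℕ),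
      (∑ i ∈ Finset.range n, g (x i) • f i) = g.comp (P n) := by
    intro g n
    ext v
    rw [ContinuousLinearMap.comp_apply, hPapply, map_sum]
    rw [ContinuousLinearMap.sum_apply]
    refine Finset.sum_congr rfl fun i _ => ?_
    rw [ContinuousLinearMap.smul_apply, map_smul, smul_eq_mul, smul_eq_mul, mul_comm]
  -- tail membership
  have htail : ∀ (n : ℕ) (v : X), v - P n v ∈
      closure ((Submodule.span ℝ (x '' {i | n ≤ i}) : Submodule ℝ X) : Set X) := by
    intro n v
    have h1 : Tendsto (fun N => P N v - P n v) atTop (𝓝 (v - P n v)) :=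
      (hPtend v).sub_const _
    refine mem_closure_of_tendsto h1 ?_
    filter_upwards [eventually_ge_atTop n] with N hN
    rw [hPapply, hPapply, ← Finset.sum_Ico_eq_sub _ hN]
    exact Submodule.sum_mem _ fun i hi =>
      Submodule.smul_mem _ _ (Submodule.subset_span ⟨i, (Finset.mem_Ico.1 hi).1, rfl⟩)
  -- norm bound
  have hbound : ∀ (g : X →L[ℝ] ℝ) (n : ℕ),
      ‖g - g.comp (P n)‖ ≤ tailSupX x g n * (1 + C) := by
    intro g n
    refine ContinuousLinearMap.opNorm_le_bound _
      (mul_nonneg (tailSupX_nonneg x g n) (by linarith)) fun v => ?_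
    have h1 : |g (v - P n v)| ≤ tailSupX x g n * ‖v - P n v‖ :=
      abs_le_tailSupX_closure x g n (htail n v)
    have h2 : ‖v - P n v‖ ≤ (1 + C) * ‖v‖ := by
      have h3 := (P n).le_opNorm v
      have h4 := hC n
      have h5 : ‖P n v‖ ≤ C * ‖v‖ :=
        le_trans h3 (mul_le_mul_of_nonneg_right h4 (norm_nonneg v))
      calc ‖v - P n v‖ ≤ ‖v‖ + ‖P n v‖ := norm_sub_le _ _
        _ ≤ ‖v‖ + C * ‖v‖ := by linarith
        _ = (1 + C) * ‖v‖ := by ring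
    calc ‖(g - g.comp (P n)) v‖ = |g (v - P n v)| := by
          rw [ContinuousLinearMap.sub_apply, ContinuousLinearMap.comp_apply, ← map_sub]
          rfl
      _ ≤ tailSupX x g n * ((1 + C) * ‖v‖) :=
          le_trans h1 (mul_le_mul_of_nonneg_left h2 (tailSupX_nonneg x g n))
      _ = tailSupX x g n * (1 + C) * ‖v‖ := by ring
  tfae_have 2 → 3 := by
    rintro ⟨hLS, hPS⟩
    refine ⟨hLS, Set.eq_univ_of_forall fun g => ?_⟩
    refine mem_closure_of_tendsto (hPS g) ?_
    filter_upwards with n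
    exact Submodule.sum_mem _ fun i _ =>
      Submodule.smul_mem _ _ (Submodule.subset_span ⟨i, rfl⟩)
  tfae_have 3 → 2 := by
    rintro ⟨hLS, hdense⟩
    refine ⟨hLS, fun g => ?_⟩
    have key : ∀ h ∈ Submodule.span ℝ (Set.range f),
        Tendsto (fun n => h.comp (P n)) atTop (𝓝 h) := by
      intro h hh
      induction hh using Submodule.span_induction with
      | mem w hw =>
        obtain ⟨m, rfl⟩ := hw
        rw [tendsto_iff_norm_sub_tendsto_zero]
        have hlim := (hLS m).mul_const (1 + C)
        rw [zero_mul] at hlim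
        refine squeeze_zero (fun n => norm_nonneg _) (fun n => ?_) hlim
        rw [norm_sub_rev]
        exact hbound (f m) n
      | zero => simpa using tendsto_const_nhds
      | add w₁ w₂ h₁ h₂ ih₁ ih₂ =>
        have := ih₁.add ih₂
        simpa [ContinuousLinearMap.add_comp] using this
      | smul c w hw ih =>
        have := ih.const_smul c
        simpa [ContinuousLinearMap.smul_comp] using this
    have hgP : Tendsto (fun n => g.comp (P n)) atTop (𝓝 g) := by
      rw [Metric.tendsto_atTop]
      intro ε hε
      have hgc : g ∈ closure ((Submodule.span ℝ (Set.range f) : Submodule ℝ (X →L[ℝ] ℝ)) :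
          Set (X →L[ℝ] ℝ)) := by rw [hdense]; trivial
      have hCp : (0:ℝ) < 3 * (C + 1) := by linarith
      obtain ⟨h, hh, hdist⟩ := Metric.mem_closure_iff.1 hgc (ε / (3 * (C + 1)))
        (div_pos hε hCp)
      obtain ⟨N0, hN0⟩ := Metric.tendsto_atTop.1 (key h hh) (ε / 3) (by linarith)
      refine ⟨N0, fun n hn => ?_⟩
      have h1 : ‖g.comp (P n) - h.comp (P n)‖ ≤ ‖g - h‖ * C := by
        rw [← ContinuousLinearMap.sub_comp]
        calc ‖(g - h).comp (P n)‖ ≤ ‖g - h‖ * ‖P n‖ := ContinuousLinearMap.opNorm_comp_le _ _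
          _ ≤ ‖g - h‖ * C := mul_le_mul_of_nonneg_left (hC n) (norm_nonneg _)
      have hdist' : ‖g - h‖ < ε / (3 * (C + 1)) := by rwa [dist_eq_norm] at hdist
      have h2 : ‖h.comp (P n) - h‖ < ε / 3 := by
        have := hN0 n hn; rwa [dist_eq_norm] at this
      rw [dist_eq_norm]
      have h3 : g.comp (P n) - g
          = (g.comp (P n) - h.comp (P n)) + (h.comp (P n) - h) + (h - g) := by abel
      calc ‖g.comp (P n) - g‖
          ≤ ‖g.comp (P n) - h.comp (P n)‖ + ‖h.comp (P n) - h‖ + ‖h - g‖ := by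
            rw [h3]; exact le_trans (norm_add_le _ _) (by gcongr; exact norm_add_le _ _)
        _ ≤ ‖g - h‖ * C + ‖h.comp (P n) - h‖ + ‖g - h‖ := by rw [norm_sub_rev h g]; gcongr
        _ < ε := by
            have hne : 0 ≤ ‖g - h‖ := norm_nonneg _
            have hmul : ‖g - h‖ * (C + 1) < ε / (3 * (C + 1)) * (C + 1) := by
              apply mul_lt_mul_of_pos_right hdist' (by linarith)
            have : ε / (3 * (C + 1)) * (C + 1) = ε / 3 := by
              field_simp
            nlinarith
    have heq : (fun n => ∑ i ∈ Finset.range n, g (x i) • f i)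
        = fun n => g.comp (P n) := funext fun n => hSg g n
    rw [heq]
    exact hgP
  tfae_have 2 → 1 := by
    rintro ⟨hLS, hPS⟩ u ⟨m, n, a, hmn, hnm, hu, hnorm⟩ g
    have hmsm : StrictMono m :=
      strictMono_nat_of_lt_succ fun k => lt_of_le_of_lt (hmn k) (hnm k)
    have hmtop : Tendsto m atTop atTop := hmsm.tendsto_atTop
    have humem : ∀ k, u k ∈ Submodule.span ℝ (x '' {i | m k ≤ i}) := by
      intro k
      rw [hu k]
      exact Submodule.sum_mem _ fun i hi =>
        Submodule.smul_mem _ _ (Submodule.subset_span ⟨i, (Finset.mem_Icc.1 hi).1, rfl⟩)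
    have hfu : ∀ j, Tendsto (fun k => f j (u k)) atTop (𝓝 0) := by
      intro j
      refine squeeze_zero_norm (fun k => ?_) ((hLS j).comp hmtop)
      have h1 := abs_le_tailSupX x (f j) (m k) (humem k)
      rw [hnorm k, mul_one] at h1
      simpa [Real.norm_eq_abs] using h1
    rw [Metric.tendsto_atTop]
    intro ε hε
    obtain ⟨n0, hn0⟩ := Metric.tendsto_atTop.1 (hPS g) (ε / 2) (by linarith)
    set h : X →L[ℝ] ℝ := ∑ i ∈ Finset.range n0, g (x i) • f i with hhdef
    have hgh : ‖g - h‖ < ε / 2 := by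
      have := hn0 n0 le_rfl
      rw [dist_eq_norm] at this
      rwa [norm_sub_rev] at this
    have hhu : Tendsto (fun k => h (u k)) atTop (𝓝 0) := by
      have heq : ∀ k, h (u k) = ∑ i ∈ Finset.range n0, g (x i) * f i (u k) := by
        intro k
        rw [hhdef, ContinuousLinearMap.sum_apply]
        exact Finset.sum_congr rfl fun i _ => rfl
      rw [funext heq]
      have := tendsto_finset_sum (Finset.range n0)
        (fun i _ => ((hfu i).const_mul (g (x i))))
      simpa using this
    obtain ⟨K, hK⟩ := Metric.tendsto_atTop.1 hhu (ε / 2) (by linarith)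
    refine ⟨K, fun k hk => ?_⟩
    rw [Real.dist_eq, sub_zero]
    have h1 : |g (u k) - h (u k)| ≤ ‖g - h‖ * ‖u k‖ := by
      have := (g - h).le_opNorm (u k)
      simpa [Real.norm_eq_abs] using this
    rw [hnorm k, mul_one] at h1
    have h2 : |h (u k)| < ε / 2 := by
      have := hK k hk
      rwa [Real.dist_eq, sub_zero] at this
    calc |g (u k)| ≤ |g (u k) - h (u k)| + |h (u k)| := by
          have := abs_add_le (g (u k) - h (u k)) (h (u k))
          simpa using this
      _ < ε := by linarith
  tfae_have 1 → 2 := by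
    intro ha
    have contra : ∀ (g : X →L[ℝ] ℝ) (δ : ℝ), 0 < δ →
        (∀ E : ℕ, ∃ (s N : ℕ) (b : ℕ → ℝ) (u : X), E ≤ s ∧ s ≤ N ∧
          u = ∑ i ∈ Finset.Icc s N, b i • x i ∧ ‖u‖ = 1 ∧ δ ≤ |g u|) → False := by
      intro g δ hδ hcl
      choose s N b u hEs hsN hurep hunorm hgu using hcl
      set E : ℕ → ℕ := fun k => Nat.rec 0 (fun _ prev => N prev + 1) k with hEdef
      have hE : ∀ k, E (k + 1) = N (E k) + 1 := fun k => rfl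
      set m : ℕ → ℕ := fun k => s (E k) with hmdef
      set n' : ℕ → ℕ := fun k => N (E k) with hn'def
      have hmn' : ∀ k, m k ≤ n' k := fun k => hsN (E k)
      have hstep : ∀ k, n' k < m (k + 1) := by
        intro k
        have h3 : E (k + 1) ≤ m (k + 1) := hEs (E (k + 1))
        have h4 : E (k + 1) = n' k + 1 := hE k
        omega
      have hmono : StrictMono m :=
        strictMono_nat_of_lt_succ fun k => lt_of_le_of_lt (hmn' k) (hstep k)
      set a : ℕ → ℝ := fun i => b (E (Nat.findGreatest (fun k => m k ≤ i) i)) i with hadef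
      have hfind : ∀ k i, m k ≤ i → i ≤ n' k →
          Nat.findGreatest (fun j => m j ≤ i) i = k := by
        intro k i h1 h2
        have hki : k ≤ i := le_trans hmono.le_apply h1
        have hkle : k ≤ Nat.findGreatest (fun j => m j ≤ i) i :=
          Nat.le_findGreatest hki h1
        have hge : Nat.findGreatest (fun j => m j ≤ i) i ≤ k := by
          by_contra hcon
          push_neg at hcon
          have hP : m (Nat.findGreatest (fun j => m j ≤ i) i) ≤ i :=
            Nat.findGreatest_spec (P := fun j => m j ≤ i) (n := i) hki h1
          have hm1 : m (k + 1) ≤ m (Nat.findGreatest (fun j => m j ≤ i) i) :=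
            hmono.monotone hcon
          have := hstep k
          omega
        omega
      have hblock : IsNormalizedBlock x (fun k => u (E k)) := by
        refine ⟨m, n', a, hmn', hstep, fun k => ?_, fun k => hunorm (E k)⟩
        show u (E k) = _
        rw [hurep (E k)]
        refine Finset.sum_congr rfl fun i hi => ?_
        obtain ⟨h1, h2⟩ := Finset.mem_Icc.1 hi
        rw [hadef]
        simp only [hfind k i h1 h2]
      have hwn := ha _ hblock g
      obtain ⟨K, hK⟩ := Metric.tendsto_atTop.1 hwn δ hδ
      have hlt := hK K le_rfl
      rw [Real.dist_eq, sub_zero] at hlt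
      exact absurd (hgu (E K)) (not_le.2 hlt)
    refine ⟨?_, ?_⟩
    · -- locally shrinking
      intro j
      by_contra hno
      obtain ⟨ε, hε, hεle⟩ := exists_eps_of_not_tendsto hno
      refine contra (f j) (ε / 2) (by linarith) fun E0 => ?_
      have hlt : ε / 2 < tailSupX x (f j) E0 := lt_of_lt_of_le (by linarith) (hεle E0)
      obtain ⟨y, hy, hylt⟩ := exists_lt_of_lt_csSup ⟨_, tailSet_mem_zero x (f j) E0⟩ hlt
      obtain ⟨z, ⟨hzspan, hznorm⟩, rfl⟩ := hy
      have hz0 : z ≠ 0 := by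
        rintro rfl
        simp at hylt
        linarith
      have hzn : 0 < ‖z‖ := norm_pos_iff.2 hz0
      obtain ⟨Nz, hNz, az, hrep⟩ := exists_repr hzspan
      have hzn1 : ‖‖z‖⁻¹ • z‖ = 1 := by
        rw [norm_smul, norm_inv, norm_norm, inv_mul_cancel₀ hzn.ne']
      refine ⟨E0, Nz, fun i => ‖z‖⁻¹ * az i, ‖z‖⁻¹ • z, le_rfl, hNz, ?_, hzn1, ?_⟩
      · rw [hrep, Finset.smul_sum]
        exact Finset.sum_congr rfl fun i _ => by rw [smul_smul]
      · have hinv : 1 ≤ ‖z‖⁻¹ := (one_le_inv₀ hzn).2 hznorm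
        rw [map_smul, smul_eq_mul, abs_mul, abs_inv, abs_norm]
        calc ε / 2 ≤ |f j z| := le_of_lt hylt
          _ = 1 * |f j z| := (one_mul _).symm
          _ ≤ ‖z‖⁻¹ * |f j z| := mul_le_mul_of_nonneg_right hinv (abs_nonneg _)
    · -- pre-shrinking
      intro g
      by_contra hno
      rw [Metric.tendsto_atTop] at hno
      push_neg at hno
      obtain ⟨ε, hε, hfreq⟩ := hno
      have hC2 : (0:ℝ) < C + 2 := by linarith
      refine contra g (ε / (4 * (C + 2))) (div_pos hε (by linarith)) fun E0 => ?_
      obtain ⟨n0, hn0ge, hn0⟩ := hfreq E0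
      have hdist : ε ≤ ‖g - g.comp (P n0)‖ := by
        rw [dist_eq_norm, hSg g n0] at hn0
        rwa [norm_sub_rev] at hn0
      have hv : ∃ v : X, ‖v‖ ≤ 1 ∧ ε / 2 < ‖(g - g.comp (P n0)) v‖ := by
        by_contra hcon
        push_neg at hcon
        have hle : ‖g - g.comp (P n0)‖ ≤ ε / 2 := by
          refine ContinuousLinearMap.opNorm_le_bound _ (by linarith) fun v => ?_
          rcases eq_or_ne v 0 with rfl | hv0
          · simp
          · have hvn : 0 < ‖v‖ := norm_pos_iff.2 hv0
            have hnv1 : ‖‖v‖⁻¹ • v‖ ≤ 1 := by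
              rw [norm_smul, norm_inv, norm_norm, inv_mul_cancel₀ hvn.ne']
            have h1 := hcon (‖v‖⁻¹ • v) hnv1
            rw [map_smul, norm_smul, norm_inv, norm_norm] at h1
            rw [← div_le_iff₀ hvn, div_eq_inv_mul]
            exact h1
        linarith
      obtain ⟨v, hv1, hv2⟩ := hv
      set w : ℕ → X := fun N => ∑ i ∈ Finset.Ico n0 N, f i v • x i with hwdef
      have hwt : Tendsto w atTop (𝓝 (v - P n0 v)) := by
        have heq : ∀ᶠ N in atTop, P N v - P n0 v = w N := by
          filter_upwards [eventually_ge_atTop n0] with N hN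
          rw [hwdef]
          rw [hPapply, hPapply, ← Finset.sum_Ico_eq_sub _ hN]
        exact Tendsto.congr' heq ((hPtend v).sub_const _)
      have hveq : (g - g.comp (P n0)) v = g (v - P n0 v) := by
        rw [ContinuousLinearMap.sub_apply, ContinuousLinearMap.comp_apply, ← map_sub]
      have hwnorm : ‖v - P n0 v‖ ≤ 1 + C := by
        have h3 := (P n0).le_opNorm v
        have h4 := hC n0
        have h5 : ‖P n0 v‖ ≤ C := by nlinarith [norm_nonneg (P n0 v), norm_nonneg v]
        calc ‖v - P n0 v‖ ≤ ‖v‖ + ‖P n0 v‖ := norm_sub_le _ _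
          _ ≤ 1 + C := by linarith
      have h1 : Tendsto (fun N => |g (w N)|) atTop (𝓝 |g (v - P n0 v)|) :=
        ((g.continuous.tendsto _).comp hwt).abs
      have h2 : Tendsto (fun N => ‖w N‖) atTop (𝓝 ‖v - P n0 v‖) := hwt.norm
      have habs : ε / 4 < |g (v - P n0 v)| := by
        rw [← hveq]
        calc ε / 4 < ε / 2 := by linarith
          _ < ‖(g - g.comp (P n0)) v‖ := hv2
          _ = |(g - g.comp (P n0)) v| := rfl
      have hev1 : ∀ᶠ N in atTop, ε / 4 < |g (w N)| := h1.eventually_const_lt habs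
      have hev2 : ∀ᶠ N in atTop, ‖w N‖ < C + 2 :=
        h2.eventually_lt_const (by linarith)
      obtain ⟨N1, hN1a, hN1bc⟩ := (hev1.and (hev2.and (eventually_ge_atTop (n0 + 1)))).exists
      obtain ⟨hN1b, hN1c⟩ := hN1bc
      have hIcc : Finset.Ico n0 N1 = Finset.Icc n0 (N1 - 1) := by
        ext i
        simp only [Finset.mem_Ico, Finset.mem_Icc]
        omega
      have hw0 : w N1 ≠ 0 := by
        intro hzero
        rw [hzero] at hN1a
        simp at hN1a
        linarith
      have hwpos : 0 < ‖w N1‖ := norm_pos_iff.2 hw0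
      have hwn1 : ‖‖w N1‖⁻¹ • w N1‖ = 1 := by
        rw [norm_smul, norm_inv, norm_norm, inv_mul_cancel₀ hwpos.ne']
      refine ⟨n0, N1 - 1, fun i => ‖w N1‖⁻¹ * f i v, ‖w N1‖⁻¹ • w N1, hn0ge, by omega, ?_,
        hwn1, ?_⟩
      · rw [hwdef]
        simp only
        rw [hIcc, Finset.smul_sum]
        exact Finset.sum_congr rfl fun i _ => by rw [smul_smul]
      · rw [map_smul, smul_eq_mul, abs_mul, abs_inv, abs_norm]
        have hkey : ε / (4 * (C + 2)) ≤ ε / 4 / ‖w N1‖ := by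
          rw [← div_div]
          gcongr
        calc ε / (4 * (C + 2)) ≤ (ε / 4) / ‖w N1‖ := hkey
          _ ≤ |g (w N1)| / ‖w N1‖ := by gcongr
          _ = ‖w N1‖⁻¹ * |g (w N1)| := div_eq_inv_mul _ _
  tfae_finish
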